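/- Let D ⊆ ℝⁿ be compact convex and f convex and twice differentiable with ∇f Lipschitz-continuous on D with constant L > 0. Then the curvature constant C_f (defined as the supremum over x, s ∈ D, α ∈ [0,1], y = x + α(s-x), of (1/α²)(f(y) - f(x) - ⟨y-x, ∇f(x)⟩)) satisfies C_f ≤ (1/2)·diam(D)²·L. -/

import Mathlib

open intervalIntegral in
private lemma descent_lemma {n : ℕ} {D : Set (EuclideanSpace ℝ (Fin n))}
    (hDconv : Convex ℝ D)
    {f : EuclideanSpace ℝ (Fin n) → ℝ} (hf : ContDiff ℝ 2 f)
    {L : ℝ} (hL : 0 ≤ L)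
    (hLip : ∀ x ∈ D, ∀ y ∈ D, ‖gradient f y - gradient f x‖ ≤ L * ‖y - x‖)
    {p q : EuclideanSpace ℝ (Fin n)} (hp : p ∈ D) (hq : q ∈ D) :
    f q - f p - inner ℝ (q - p) (gradient f p) ≤ L / 2 * ‖q - p‖ ^ 2 := by
  set v := q - p with hv
  have hdiff : Differentiable ℝ f := hf.differentiable two_ne_zero
  set γ : ℝ → EuclideanSpace ℝ (Fin n) := fun t => p + t • v with hγ
  have hγderiv : ∀ t : ℝ, HasDerivAt γ v t := by
    intro t
    simpa [hγ] using ((hasDerivAt_id t).smul_const v).const_add p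
  have hgradcont : Continuous (fun x => gradient f x) := by
    have : Continuous (fun x => fderiv ℝ f x) := (hf.fderiv_right (m := 1) (by norm_num)).continuous
    exact ((InnerProductSpace.toDual ℝ (EuclideanSpace ℝ (Fin n))).symm.continuous).comp this
  have key : ∀ t : ℝ, HasDerivAt (fun t => f (γ t)) (inner ℝ (gradient f (γ t)) v : ℝ) t := by
    intro t
    have h1 : HasFDerivAt f (InnerProductSpace.toDual ℝ _ (gradient f (γ t))) (γ t) :=
      ((hdiff (γ t)).hasGradientAt).hasFDerivAt
    have := h1.comp_hasDerivAt t (hγderiv t)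
    simpa only [InnerProductSpace.toDual_apply_apply, Function.comp_def] using this
  have hcont : Continuous (fun t => (inner ℝ (gradient f (γ t)) v : ℝ)) := by
    exact (Continuous.inner (hgradcont.comp (by fun_prop)) continuous_const)
  have hFTC : f q - f p = ∫ t in (0:ℝ)..1, (inner ℝ (gradient f (γ t)) v : ℝ) := by
    have := intervalIntegral.integral_eq_sub_of_hasDerivAt
      (fun t _ => key t) (hcont.intervalIntegrable 0 1)
    simp only [hγ, hv, one_smul, zero_smul, add_zero, add_sub_cancel] at this ⊢
    exact this.symm
  have hconst : (inner ℝ (q - p) (gradient f p) : ℝ)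
      = ∫ t in (0:ℝ)..1, (inner ℝ (gradient f p) v : ℝ) := by
    have h2 : (∫ _ in (0:ℝ)..1, (inner ℝ (gradient f p) v : ℝ)) = inner ℝ (gradient f p) v := by
      simp
    rw [h2, hv, real_inner_comm]
  rw [hFTC, hconst, ← intervalIntegral.integral_sub (hcont.intervalIntegrable 0 1)
      (intervalIntegrable_const)]
  have hbound : ∀ t ∈ Set.Icc (0:ℝ) 1,
      (inner ℝ (gradient f (γ t)) v : ℝ) - inner ℝ (gradient f p) v ≤ L * t * ‖v‖ ^ 2 := by
    intro t ht
    have hγD : γ t ∈ D := hDconv.add_smul_sub_mem hp hq ht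
    have h1 : (inner ℝ (gradient f (γ t)) v : ℝ) - inner ℝ (gradient f p) v
        = inner ℝ (gradient f (γ t) - gradient f p) v := by
      rw [inner_sub_left]
    rw [h1]
    calc (inner ℝ (gradient f (γ t) - gradient f p) v : ℝ)
        ≤ ‖gradient f (γ t) - gradient f p‖ * ‖v‖ := real_inner_le_norm _ _
      _ ≤ (L * ‖γ t - p‖) * ‖v‖ := by
          gcongr
          exact hLip p hp (γ t) hγD
      _ = L * t * ‖v‖ ^ 2 := by
          have : γ t - p = t • v := by simp [hγ]
          rw [this, norm_smul, Real.norm_eq_abs, abs_of_nonneg ht.1]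
          ring
  calc (∫ t in (0:ℝ)..1, ((inner ℝ (gradient f (γ t)) v : ℝ) - inner ℝ (gradient f p) v))
      ≤ ∫ t in (0:ℝ)..1, L * t * ‖v‖ ^ 2 := by
        apply intervalIntegral.integral_mono_on (by norm_num)
          ((hcont.sub continuous_const).intervalIntegrable 0 1)
          ((by fun_prop : Continuous fun t : ℝ => L * t * ‖v‖ ^ 2).intervalIntegrable 0 1)
        exact hbound
    _ = L / 2 * ‖v‖ ^ 2 := by
        have h3 : (fun t : ℝ => L * t * ‖v‖ ^ 2) = fun t : ℝ => (L * ‖v‖ ^ 2) * t := by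
          funext t; ring
        rw [h3, intervalIntegral.integral_const_mul, integral_id]
        ring

/-- If `f` is convex and twice differentiable on the compact convex set `D ⊆ ℝⁿ`
and its gradient is Lipschitz-continuous on `D` with constant `L > 0`, then the
curvature constant satisfies `C_f ≤ (1/2) · diam(D)² · L`. -/
theorem curvature_le_of_lipschitz_gradient
    {n : ℕ} (D : Set (EuclideanSpace ℝ (Fin n)))
    (hDcomp : IsCompact D) (hDconv : Convex ℝ D)
    (f : EuclideanSpace ℝ (Fin n) → ℝ)
    (hf : ContDiff ℝ 2 f) (hconv : ConvexOn ℝ D f)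
    (L : ℝ) (hL : 0 < L)
    (hLip : ∀ x ∈ D, ∀ y ∈ D, ‖gradient f y - gradient f x‖ ≤ L * ‖y - x‖) :
    sSup {r : ℝ | ∃ x ∈ D, ∃ s ∈ D, ∃ α ∈ Set.Icc (0 : ℝ) 1,
        r = (1 / α ^ 2) *
          (f (x + α • (s - x)) - f x - inner ℝ (x + α • (s - x) - x) (gradient f x))} ≤
      (1 / 2) * Metric.diam D ^ 2 * L := by
  have hB : 0 ≤ (1 / 2) * Metric.diam D ^ 2 * L := by positivity
  apply Real.sSup_le _ hB
  rintro r ⟨x, hx, s, hs, α, ⟨hα0, hα1⟩, rfl⟩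
  rcases eq_or_lt_of_le hα0 with h0 | h0
  · simp [← h0]
    positivity
  · have hy : x + α • (s - x) ∈ D := hDconv.add_smul_sub_mem hx hs ⟨hα0, hα1⟩
    have hdes := descent_lemma hDconv hf hL.le hLip hx hy
    have hsx : ‖s - x‖ ≤ Metric.diam D := by
      rw [show ‖s - x‖ = dist s x from (dist_eq_norm s x).symm]
      exact Metric.dist_le_diam_of_mem hDcomp.isBounded hs hx
    have hnorm : ‖x + α • (s - x) - x‖ = α * ‖s - x‖ := by
      rw [add_sub_cancel_left, norm_smul, Real.norm_eq_abs, abs_of_pos h0]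
    calc (1 / α ^ 2) * (f (x + α • (s - x)) - f x
            - inner ℝ (x + α • (s - x) - x) (gradient f x))
        ≤ (1 / α ^ 2) * (L / 2 * ‖x + α • (s - x) - x‖ ^ 2) := by
          gcongr
      _ = L / 2 * ‖s - x‖ ^ 2 := by
          rw [hnorm]
          field_simp
      _ ≤ (1 / 2) * Metric.diam D ^ 2 * L := by
          rw [show (1:ℝ)/2 * Metric.diam D ^2 * L = L / 2 * Metric.diam D ^ 2 by ring]
          gcongr
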